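/- Let F be a field of characteristic different from 2, let a, b ∈ F^×, and let x, y ∈ F(√b). Then x² − ay² lies in F if and only if there exist x₁, y₁, x₂, y₂ ∈ F such that x² − ay² = (x₁² − ay₁²)·(x₂² − ab·y₂²). -/

import Mathlib

/-- **Corollary 2.** Let `F` be a field of characteristic different from 2,
`a, b ∈ F^×`, and `x, y ∈ F(√b)`.  Then `x² − a y²` lies in `F` iff there
exist `x₁, y₁, x₂, y₂ ∈ F` with
`x² − a y² = (x₁² − a y₁²)·(x₂² − a b y₂²)`. -/
theorem binary_quadratic_form_values
    (F L : Type*) [Field F] [Field L] [Algebra F L]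
    (hchar : (2 : F) ≠ 0)
    (a b : F) (ha : a ≠ 0) (hb : b ≠ 0)
    (s : L) (hs : s ^ 2 = algebraMap F L b)
    (htop : Algebra.adjoin F ({s} : Set L) = ⊤) :
    ∀ x y : L,
      ((∃ f : F, algebraMap F L f = x ^ 2 - algebraMap F L a * y ^ 2) ↔
        (∃ x₁ y₁ x₂ y₂ : F,
          x ^ 2 - algebraMap F L a * y ^ 2 =
            algebraMap F L
              ((x₁ ^ 2 - a * y₁ ^ 2) * (x₂ ^ 2 - a * b * y₂ ^ 2)))) := by
  intro x y
  set φ := algebraMap F L with hφ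
  have hinj : Function.Injective φ := (algebraMap F L).injective
  constructor
  · rintro ⟨f, hf⟩
    have hdecomp : ∀ z : L, ∃ c d : F, z = φ c + φ d * s := by
      intro z
      have hz : z ∈ Algebra.adjoin F ({s} : Set L) := htop ▸ Algebra.mem_top
      induction hz using Algebra.adjoin_induction with
      | mem u hu =>
        rcases hu with rfl
        exact ⟨0, 1, by simp⟩
      | algebraMap r => exact ⟨r, 0, by simp; rfl⟩
      | add u v hu hv ihu ihv =>
        obtain ⟨c1, d1, rfl⟩ := ihu
        obtain ⟨c2, d2, rfl⟩ := ihv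
        exact ⟨c1 + c2, d1 + d2, by simp only [map_add]; ring⟩
      | mul u v hu hv ihu ihv =>
        obtain ⟨c1, d1, rfl⟩ := ihu
        obtain ⟨c2, d2, rfl⟩ := ihv
        refine ⟨c1 * c2 + d1 * d2 * b, c1 * d2 + c2 * d1, ?_⟩
        simp only [map_add, map_mul]
        linear_combination φ d1 * φ d2 * hs
    obtain ⟨x₀, x₁, rfl⟩ := hdecomp x
    obtain ⟨y₀, y₁, rfl⟩ := hdecomp y
    by_cases hsF : ∃ t : F, φ t = s
    · obtain ⟨t, rfl⟩ := hsF
      refine ⟨x₀ + x₁ * t, y₀ + y₁ * t, 1, 0, ?_⟩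
      simp only [map_add, map_mul, map_sub, map_pow, map_one, map_zero]
      ring
    · -- independence of 1, s
      have key : ∀ c d : F, φ c + φ d * s = 0 → c = 0 ∧ d = 0 := by
        intro c d h
        by_cases hd : d = 0
        · subst hd
          simp only [map_zero, zero_mul, add_zero] at h
          exact ⟨hinj (by simpa using h), rfl⟩
        · exfalso
          apply hsF
          refine ⟨-c / d, ?_⟩
          have hdL : φ d ≠ 0 := fun h0 => hd (hinj (by simpa using h0))
          rw [map_div₀, map_neg, div_eq_iff hdL]
          linear_combination -h
      -- compute x² - a y² = φ A + φ B * s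
      set A : F := x₀ ^ 2 + b * x₁ ^ 2 - a * y₀ ^ 2 - a * b * y₁ ^ 2 with hA
      set B : F := 2 * (x₀ * x₁ - a * (y₀ * y₁)) with hB
      have hexp : (φ x₀ + φ x₁ * s) ^ 2 - φ a * (φ y₀ + φ y₁ * s) ^ 2
          = φ A + φ B * s := by
        simp only [hA, hB, map_add, map_mul, map_sub, map_pow, map_ofNat]
        linear_combination (φ x₁ ^ 2 - φ a * φ y₁ ^ 2) * hs
      rw [hexp] at hf
      have h0 : φ (A - f) + φ B * s = 0 := by
        simp only [map_sub]; linear_combination -hf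
      obtain ⟨hAf, hB0⟩ := key _ _ h0
      have hAf' : A = f := sub_eq_zero.mp hAf
      have hc : x₀ * x₁ = a * (y₀ * y₁) := by
        rcases mul_eq_zero.mp hB0 with h | h
        · exact absurd h hchar
        · exact sub_eq_zero.mp h
      have hgoal : ∀ u v w t : F,
          A = (u ^ 2 - a * v ^ 2) * (w ^ 2 - a * b * t ^ 2) →
          ∃ x₁' y₁' x₂' y₂' : F,
            (φ x₀ + φ x₁ * s) ^ 2 - φ a * (φ y₀ + φ y₁ * s) ^ 2 =
              φ ((x₁' ^ 2 - a * y₁' ^ 2) * (x₂' ^ 2 - a * b * y₂' ^ 2)) := by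
        intro u v w t h
        exact ⟨u, v, w, t, by rw [hexp, ← h, hB0, map_zero, zero_mul, add_zero]⟩
      by_cases hx0 : x₀ = 0
      · by_cases hy1 : y₁ = 0
        · apply hgoal 0 (1 / a) (a * y₀) x₁
          subst hx0 hy1
          rw [hA]
          field_simp
          ring
        · have hy0 : y₀ = 0 := by
            rw [hx0, zero_mul] at hc
            rcases mul_eq_zero.mp hc.symm with h | h
            · exact absurd h ha
            · exact (mul_eq_zero.mp h).resolve_right hy1
          apply hgoal 1 (x₁ / (a * y₁)) 0 y₁
          subst hx0 hy0
          rw [hA]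
          field_simp
          ring
      · apply hgoal 1 (y₀ / x₀) x₀ y₁
        rw [hA]
        field_simp
        linear_combination b * (x₀ * x₁ + a * (y₀ * y₁)) * hc
  · rintro ⟨x₁, y₁, x₂, y₂, h⟩
    exact ⟨(x₁ ^ 2 - a * y₁ ^ 2) * (x₂ ^ 2 - a * b * y₂ ^ 2), h.symm⟩
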